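/- For every spider graph G with d ≥ 3 legs, d+1 ≤ χ_la(G) ≤ d+2. -/

import Mathlib

open SimpleGraph

/-- The induced vertex sum of an edge labeling. -/
noncomputable def vertexSum {V : Type*} (G : SimpleGraph V) (f : Sym2 V → ℕ) (x : V) : ℕ :=
  ∑ᶠ y ∈ G.neighborSet x, f s(x, y)

/-- `f` is a local antimagic labeling of `G`. -/
def IsLocalAntimagic {V : Type*} (G : SimpleGraph V) (f : Sym2 V → ℕ) : Prop :=
  Set.BijOn f G.edgeSet (Set.Icc 1 G.edgeSet.ncard) ∧
  ∀ ⦃x y : V⦄, G.Adj x y → vertexSum G f x ≠ vertexSum G f y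

/-- The number of distinct induced vertex labels of `f`. -/
noncomputable def colorCount {V : Type*} (G : SimpleGraph V) (f : Sym2 V → ℕ) : ℕ :=
  (Set.range (vertexSum G f)).ncard

/-- The local antimagic chromatic number. -/
noncomputable def chiLA {V : Type*} (G : SimpleGraph V) : ℕ :=
  sInf {n | ∃ f : Sym2 V → ℕ, IsLocalAntimagic G f ∧ colorCount G f = n}

/-- A pendant vertex: a vertex of degree 1. -/
def IsPendant {V : Type*} (G : SimpleGraph V) (x : V) : Prop :=
  (G.neighborSet x).ncard = 1

/-- A pendant edge: an edge incident to a pendant vertex. -/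
def IsPendantEdge {V : Type*} (G : SimpleGraph V) (e : Sym2 V) : Prop :=
  e ∈ G.edgeSet ∧ ∃ x ∈ e, IsPendant G x

/-- The spider graph with `d` legs of lengths `y i`: the core is `none`, and leg `i`
consists of vertices `some ⟨i, j⟩` for `j : Fin (y i)`, forming a path from the core. -/
def spider (d : ℕ) (y : Fin d → ℕ) : SimpleGraph (Option (Σ i : Fin d, Fin (y i))) :=
  SimpleGraph.fromRel (fun u v =>
    ∃ (i : Fin d) (j : Fin (y i)), (u = none ∧ v = some ⟨i, j⟩ ∧ (j : ℕ) = 0) ∨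
      (∃ k : Fin (y i), u = some ⟨i, j⟩ ∧ v = some ⟨i, k⟩ ∧ (j : ℕ) + 1 = (k : ℕ)))

namespace SpiderAux
section
variable (d : ℕ) (y : Fin d → ℕ)
abbrev V := Option (Σ i : Fin d, Fin (y i))

def M : ℕ := ∑ i, y i

def Y : ℕ → ℕ := fun n => if h : n < d then y ⟨n, h⟩ else 0

def B : ℕ → ℕ := fun n => ∑ t ∈ Finset.range n, Y d y t

lemma B_succ (n : ℕ) : B d y (n + 1) = B d y n + Y d y n := Finset.sum_range_succ _ n

lemma Y_eq (i : Fin d) : Y d y i.1 = y i := by simp [Y]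

lemma B_mono : Monotone (B d y) := by
  intro a b hab
  exact Finset.sum_le_sum_of_subset (Finset.range_subset_range.2 hab)

lemma B_d : B d y d = M d y := by
  rw [M, B, Finset.sum_range fun t => Y d y t]
  exact Finset.sum_congr rfl fun i _ => Y_eq d y i

/-- position of edge `(i,j)` (the edge whose deeper endpoint is `v i j`, `j : ℕ`, `j < y i`). -/
def posE (i : Fin d) (j : ℕ) : ℕ :=
  if i.1 = 1 then B d y i.1 + 1 + j else B d y (i.1 + 1) - j

/-- the zig-zag labeling of positions. -/
def cc (j : ℕ) : ℕ := if j % 2 = 0 then j / 2 else M d y + 1 - (j + 1) / 2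

/-- the label of edge `(i,j)`. -/
def lab (i : Fin d) (j : ℕ) : ℕ := cc d y (posE d y i j)

lemma posE_bounds {i : Fin d} {j : ℕ} (hj : j < y i) :
    B d y i.1 < posE d y i j ∧ posE d y i j ≤ B d y (i.1 + 1) := by
  have h1 : B d y (i.1 + 1) = B d y i.1 + y i := by rw [B_succ, Y_eq d y i]
  unfold posE; split <;> omega

lemma B_le_M (n : ℕ) (hn : n ≤ d) : B d y n ≤ M d y := by
  rw [← B_d]; exact B_mono d y hn

lemma posE_mem {i : Fin d} {j : ℕ} (hj : j < y i) :
    1 ≤ posE d y i j ∧ posE d y i j ≤ M d y := by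
  obtain ⟨h1, h2⟩ := posE_bounds d y hj
  have := B_le_M d y (i.1 + 1) i.2
  omega

lemma posE_inj {i i' : Fin d} {j j' : ℕ} (hj : j < y i) (hj' : j' < y i')
    (h : posE d y i j = posE d y i' j') : i = i' ∧ j = j' := by
  have hii : i = i' := by
    by_contra hne
    rcases Ne.lt_or_gt (fun hv => hne (Fin.ext hv) : i.1 ≠ i'.1) with hlt | hlt
    · have := (posE_bounds d y hj).2
      have := (posE_bounds d y hj').1
      have := B_mono d y (show i.1 + 1 ≤ i'.1 from hlt)
      omega
    · have := (posE_bounds d y hj).1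
      have := (posE_bounds d y hj').2
      have := B_mono d y (show i'.1 + 1 ≤ i.1 from hlt)
      omega
  subst hii
  refine ⟨rfl, ?_⟩
  have h1 : B d y (i.1 + 1) = B d y i.1 + y i := by rw [B_succ, Y_eq d y i]
  unfold posE at h; split at h <;> omega

lemma cc_mem {j : ℕ} (h1 : 1 ≤ j) (h2 : j ≤ M d y) : 1 ≤ cc d y j ∧ cc d y j ≤ M d y := by
  unfold cc; split <;> omega

lemma cc_injOn {j j' : ℕ} (hj : 1 ≤ j ∧ j ≤ M d y) (hj' : 1 ≤ j' ∧ j' ≤ M d y)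
    (h : cc d y j = cc d y j') : j = j' := by
  unfold cc at h; split at h <;> split at h <;> omega

lemma cc_one : cc d y 1 = M d y := by unfold cc; norm_num

lemma cc_pair {j : ℕ} (h1 : 1 ≤ j) (h2 : j + 1 ≤ M d y) :
    cc d y j + cc d y (j + 1) = if j % 2 = 0 then M d y else M d y + 1 := by
  unfold cc; split <;> split <;> omega

lemma cc_pair' {j : ℕ} (h2 : j + 1 ≤ M d y) :
    M d y ≤ cc d y j + cc d y (j + 1) := by
  unfold cc; split <;> split <;> omega

lemma cc_last (h : 3 ≤ M d y) : 2 ≤ cc d y (M d y) := by unfold cc; split <;> omega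


lemma some_eq_some {i i' : Fin d} {j : Fin (y i)} {k : Fin (y i')} :
    (some ⟨i, j⟩ : V d y) = some ⟨i', k⟩ ↔ i = i' ∧ (j : ℕ) = (k : ℕ) := by
  constructor
  · intro h
    obtain ⟨hi, hj⟩ := Sigma.mk.inj_iff.1 (Option.some.inj h)
    subst hi
    exact ⟨rfl, congrArg Fin.val (eq_of_heq hj)⟩
  · rintro ⟨hi, hj⟩
    subst hi
    exact congrArg some (congrArg _ (Fin.ext hj))

lemma adj_none_some {i : Fin d} {j : Fin (y i)} :
    (spider d y).Adj none (some ⟨i, j⟩) ↔ (j : ℕ) = 0 := by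
  rw [spider, fromRel_adj]
  constructor
  · rintro ⟨-, h | h⟩
    · obtain ⟨i₀, j₀, h⟩ := h
      rcases h with ⟨-, hv, hj⟩ | ⟨k₀, hu, -, -⟩
      · obtain ⟨hi, hj'⟩ := (some_eq_some d y).1 hv.symm
        omega
      · exact absurd hu (by simp)
    · obtain ⟨i₀, j₀, h⟩ := h
      rcases h with ⟨hu, -, -⟩ | ⟨k₀, -, hv, -⟩
      · exact absurd hu (by simp)
      · exact absurd hv (by simp)
  · intro hj
    exact ⟨by simp, Or.inl ⟨i, j, Or.inl ⟨rfl, rfl, hj⟩⟩⟩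

lemma adj_some_some {i i' : Fin d} {j : Fin (y i)} {k : Fin (y i')} :
    (spider d y).Adj (some ⟨i, j⟩) (some ⟨i', k⟩) ↔
      i = i' ∧ ((j : ℕ) + 1 = (k : ℕ) ∨ (k : ℕ) + 1 = (j : ℕ)) := by
  rw [spider, fromRel_adj]
  constructor
  · rintro ⟨-, h | h⟩
    · obtain ⟨i₀, j₀, h⟩ := h
      rcases h with ⟨hu, -, -⟩ | ⟨k₀, hu, hv, hjk⟩
      · exact absurd hu (by simp)
      · obtain ⟨hi1, hj1⟩ := (some_eq_some d y).1 hu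
        obtain ⟨hi2, hj2⟩ := (some_eq_some d y).1 hv
        exact ⟨hi1.trans hi2.symm, Or.inl (by omega)⟩
    · obtain ⟨i₀, j₀, h⟩ := h
      rcases h with ⟨hu, -, -⟩ | ⟨k₀, hu, hv, hjk⟩
      · exact absurd hu (by simp)
      · obtain ⟨hi1, hj1⟩ := (some_eq_some d y).1 hu
        obtain ⟨hi2, hj2⟩ := (some_eq_some d y).1 hv
        exact ⟨hi2.trans hi1.symm, Or.inr (by omega)⟩
  · rintro ⟨hi, hjk | hjk⟩
    · subst hi
      refine ⟨fun h => by have := ((some_eq_some d y).1 h).2; omega, Or.inl ?_⟩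
      exact ⟨i, j, Or.inr ⟨k, rfl, rfl, hjk⟩⟩
    · subst hi
      refine ⟨fun h => by have := ((some_eq_some d y).1 h).2; omega, Or.inr ?_⟩
      exact ⟨i, k, Or.inr ⟨j, rfl, rfl, hjk⟩⟩

lemma not_adj_none_none : ¬ (spider d y).Adj none none := fun h => h.ne rfl

lemma adj_none_iff {u : V d y} :
    (spider d y).Adj none u ↔ ∃ (i : Fin d) (j : Fin (y i)), (j : ℕ) = 0 ∧ u = some ⟨i, j⟩ := by
  match u with
  | none => simp [not_adj_none_none]
  | some ⟨i, j⟩ =>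
    rw [adj_none_some]
    constructor
    · intro h; exact ⟨i, j, h, rfl⟩
    · rintro ⟨i', j', hj', hu⟩
      obtain ⟨hi, hj⟩ := (some_eq_some d y).1 hu.symm
      omega



/-- the shallower endpoint of the edge whose deeper endpoint is `⟨i,j⟩`. -/
def pred (i : Fin d) (j : Fin (y i)) : V d y :=
  if h : (j : ℕ) = 0 then none
  else some ⟨i, ⟨(j : ℕ) - 1, lt_of_le_of_lt (Nat.pred_le _) j.2⟩⟩

/-- the edge indexed by its deeper endpoint. -/
def eIx (p : Σ i : Fin d, Fin (y i)) : Sym2 (V d y) := s(pred d y p.1 p.2, some ⟨p.1, p.2⟩)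

lemma adj_pred (i : Fin d) (j : Fin (y i)) : (spider d y).Adj (pred d y i j) (some ⟨i, j⟩) := by
  unfold pred
  split
  · exact (adj_none_some d y).2 (by assumption)
  · exact (adj_some_some d y).2 ⟨rfl, Or.inl (by simp; omega)⟩

lemma edgeSet_eq : (spider d y).edgeSet = Set.range (eIx d y) := by
  ext e
  induction e using Sym2.ind with
  | _ u v =>
    rw [mem_edgeSet]
    constructor
    · intro h
      match u, v with
      | none, none => exact absurd h (not_adj_none_none d y)
      | none, some ⟨i, j⟩ =>
        refine ⟨⟨i, j⟩, ?_⟩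
        have hj := (adj_none_some d y).1 h
        simp only [eIx, pred, dif_pos hj]
      | some ⟨i, j⟩, none =>
        refine ⟨⟨i, j⟩, ?_⟩
        have hj := (adj_none_some d y).1 h.symm
        simp only [eIx, pred, dif_pos hj]
        exact Sym2.eq_swap
      | some ⟨i, j⟩, some ⟨i', k⟩ =>
        obtain ⟨hi, hc | hc⟩ := (adj_some_some d y).1 h
        · subst hi
          refine ⟨⟨i, k⟩, ?_⟩
          have hk : (k : ℕ) ≠ 0 := by omega
          simp only [eIx, pred, dif_neg hk]
          rw [Sym2.eq_iff]
          left
          refine ⟨((some_eq_some d y).2 ⟨rfl, ?_⟩).symm, rfl⟩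
          show (j : ℕ) = (k : ℕ) - 1
          omega
        · subst hi
          refine ⟨⟨i, j⟩, ?_⟩
          have hj : (j : ℕ) ≠ 0 := by omega
          simp only [eIx, pred, dif_neg hj]
          rw [Sym2.eq_swap, Sym2.eq_iff]
          left
          refine ⟨rfl, ((some_eq_some d y).2 ⟨rfl, ?_⟩).symm⟩
          show (k : ℕ) = (j : ℕ) - 1
          omega
    · rintro ⟨p, hp⟩
      have := adj_pred d y p.1 p.2
      have he : s(pred d y p.1 p.2, some ⟨p.1, p.2⟩) = s(u, v) := hp
      rw [Sym2.eq_iff] at he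
      rcases he with ⟨h1, h2⟩ | ⟨h1, h2⟩
      · rwa [h1, h2] at this
      · rw [h1, h2] at this; exact this.symm

lemma eIx_inj : Function.Injective (eIx d y) := by
  rintro ⟨i, j⟩ ⟨i', j'⟩ h
  simp only [eIx, Sym2.eq_iff] at h
  rcases h with ⟨h1, h2⟩ | ⟨h1, h2⟩
  · obtain ⟨hi, hj⟩ := (some_eq_some d y).1 h2
    subst hi
    exact Sigma.ext rfl (heq_of_eq (Fin.ext hj))
  · -- pred = some, some = pred : impossible
    exfalso
    unfold pred at h1 h2
    split at h1
    · exact absurd h1 (by simp)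
    · split at h2
      · exact absurd h2.symm (by simp)
      · obtain ⟨hi, hj⟩ := (some_eq_some d y).1 h1
        obtain ⟨hi', hj'⟩ := (some_eq_some d y).1 h2.symm
        simp only at hj hj'
        omega

lemma ncard_edgeSet : (spider d y).edgeSet.ncard = ∑ i, y i := by
  rw [edgeSet_eq, ← Nat.card_coe_set_eq,
    Nat.card_range_of_injective (eIx_inj d y), Nat.card_eq_fintype_card, Fintype.card_sigma]
  simp


/-- the deeper neighbor, as needed. -/
def succV (i : Fin d) (j : ℕ) (h : j + 1 < y i) : V d y := some ⟨i, ⟨j + 1, h⟩⟩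

lemma mem_nbhd_some {i : Fin d} {j : Fin (y i)} {u : V d y} :
    u ∈ (spider d y).neighborSet (some ⟨i, j⟩) ↔
      u = pred d y i j ∨ ∃ h : (j : ℕ) + 1 < y i, u = succV d y i j h := by
  rw [mem_neighborSet]
  match u with
  | none =>
    rw [show ((spider d y).Adj (some ⟨i,j⟩) none ↔ (j : ℕ) = 0) from
      ⟨fun h => (adj_none_some d y).1 h.symm, fun h => ((adj_none_some d y).2 h).symm⟩]
    unfold pred succV
    constructor
    · intro h; left; rw [dif_pos h]
    · rintro (h | ⟨h, hu⟩)
      · split at h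
        · assumption
        · exact absurd h (by simp)
      · exact absurd hu (by simp)
  | some ⟨i', k⟩ =>
    rw [adj_some_some]
    constructor
    · rintro ⟨hi, hc | hc⟩
      · subst hi
        right
        refine ⟨by omega, ?_⟩
        unfold succV
        exact (some_eq_some d y).2 ⟨rfl, by simp; omega⟩
      · subst hi
        left
        unfold pred
        rw [dif_neg (by omega : ¬ (j : ℕ) = 0)]
        exact (some_eq_some d y).2 ⟨rfl, by simp; omega⟩
    · rintro (h | ⟨h, hu⟩)
      · unfold pred at h
        split at h
        · exact absurd h (by simp)
        · obtain ⟨hi, hk⟩ := (some_eq_some d y).1 h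
          simp only at hk
          exact ⟨hi.symm, by omega⟩
      · obtain ⟨hi, hk⟩ := (some_eq_some d y).1 hu
        simp only at hk
        exact ⟨hi.symm, by omega⟩

lemma nbhd_pendant {i : Fin d} {j : Fin (y i)} (hj : (j : ℕ) + 1 = y i) :
    (spider d y).neighborSet (some ⟨i, j⟩) = {pred d y i j} := by
  ext u
  rw [mem_nbhd_some, Set.mem_singleton_iff]
  constructor
  · rintro (h | ⟨h, _⟩)
    · exact h
    · omega
  · exact Or.inl

lemma nbhd_internal {i : Fin d} {j : Fin (y i)} (hj : (j : ℕ) + 1 < y i) :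
    (spider d y).neighborSet (some ⟨i, j⟩) = {pred d y i j, succV d y i j hj} := by
  ext u
  rw [mem_nbhd_some, Set.mem_insert_iff, Set.mem_singleton_iff]
  constructor
  · rintro (h | ⟨h, hu⟩)
    · exact Or.inl h
    · exact Or.inr hu
  · rintro (h | h)
    · exact Or.inl h
    · exact Or.inr ⟨hj, h⟩

lemma pred_ne_succ {i : Fin d} {j : Fin (y i)} (hj : (j : ℕ) + 1 < y i) :
    pred d y i j ≠ succV d y i j hj := by
  unfold pred succV
  split
  · simp
  · intro h
    obtain ⟨-, hk⟩ := (some_eq_some d y).1 h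
    simp only at hk
    omega

variable (hy : ∀ i, 1 ≤ y i)

lemma nbhd_core :
    (spider d y).neighborSet none = Set.range (fun i : Fin d => (some ⟨i, ⟨0, hy i⟩⟩ : V d y)) := by
  ext u
  rw [mem_neighborSet, adj_none_iff]
  constructor
  · rintro ⟨i, j, hj, hu⟩
    exact ⟨i, by rw [hu]; exact ((some_eq_some d y).2 ⟨rfl, by simp [hj]⟩).symm⟩
  · rintro ⟨i, hu⟩
    exact ⟨i, ⟨0, hy i⟩, rfl, hu.symm⟩

lemma vsum_core (f : Sym2 (V d y) → ℕ) :
    vertexSum (spider d y) f none = ∑ i : Fin d, f s(none, some ⟨i, ⟨0, hy i⟩⟩) := by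
  rw [vertexSum, nbhd_core d y hy, finsum_mem_range, finsum_eq_sum_of_fintype]
  intro a b hab
  obtain ⟨hi, -⟩ := (some_eq_some d y).1 hab
  exact hi

lemma vsum_pendant (f : Sym2 (V d y) → ℕ) {i : Fin d} {j : Fin (y i)} (hj : (j : ℕ) + 1 = y i) :
    vertexSum (spider d y) f (some ⟨i, j⟩) = f s(some ⟨i, j⟩, pred d y i j) := by
  rw [vertexSum, nbhd_pendant d y hj, finsum_mem_singleton]

lemma vsum_internal (f : Sym2 (V d y) → ℕ) {i : Fin d} {j : Fin (y i)} (hj : (j : ℕ) + 1 < y i) :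
    vertexSum (spider d y) f (some ⟨i, j⟩) =
      f s(some ⟨i, j⟩, pred d y i j) + f s(some ⟨i, j⟩, succV d y i j hj) := by
  rw [vertexSum, nbhd_internal d y hj, finsum_mem_pair (pred_ne_succ d y hj)]

/-- half of the labeling function: `hfun u v` is the label of edge `u-v` where `v` is deeper. -/
def hfun : V d y → V d y → ℕ := fun u v =>
  match u, v with
  | none, some ⟨i, k⟩ => if (k : ℕ) = 0 then lab d y i (k : ℕ) else 0
  | some ⟨i', j'⟩, some ⟨i, k⟩ =>
      if i' = i ∧ (j' : ℕ) + 1 = (k : ℕ) then lab d y i (k : ℕ) else 0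
  | _, none => 0

def gfun : V d y → V d y → ℕ := fun u v => hfun d y u v + hfun d y v u

lemma gfun_comm (u v : V d y) : gfun d y u v = gfun d y v u := Nat.add_comm _ _

/-- the edge labeling. -/
noncomputable def F : Sym2 (V d y) → ℕ := Sym2.lift ⟨gfun d y, gfun_comm d y⟩

lemma F_mk (u v : V d y) : F d y s(u, v) = gfun d y u v := Sym2.lift_mk _ u v

lemma F_core_edge {i : Fin d} {j : Fin (y i)} (hj : (j : ℕ) = 0) :
    F d y s(none, some ⟨i, j⟩) = lab d y i (j : ℕ) := by
  rw [F_mk]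
  show hfun d y none (some ⟨i, j⟩) + hfun d y (some ⟨i, j⟩) none = _
  simp [hfun, hj]

lemma F_cons_edge {i : Fin d} {j k : Fin (y i)} (hjk : (j : ℕ) + 1 = (k : ℕ)) :
    F d y s(some ⟨i, j⟩, some ⟨i, k⟩) = lab d y i (k : ℕ) := by
  rw [F_mk]
  show hfun d y (some ⟨i, j⟩) (some ⟨i, k⟩) + hfun d y (some ⟨i, k⟩) (some ⟨i, j⟩) = _
  simp only [hfun]
  split_ifs with h1 h2 h3
  · exact absurd (h1.2) (by omega)
  · rfl
  · exact absurd hjk (by simpa using h1)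
  · exact absurd hjk (by simpa using h1)

lemma F_edge (i : Fin d) (j : Fin (y i)) :
    F d y s(pred d y i j, some ⟨i, j⟩) = lab d y i (j : ℕ) := by
  unfold pred
  split
  · exact F_core_edge d y (by assumption)
  · exact F_cons_edge d y (by simp; omega)

lemma F_eIx (p : Σ i : Fin d, Fin (y i)) :
    F d y (eIx d y p) = cc d y (posE d y p.1 (p.2 : ℕ)) := F_edge d y p.1 p.2

lemma ncard_Icc_M : (Set.Icc 1 (M d y)).ncard = M d y := by
  rw [← Finset.coe_Icc, Set.ncard_coe_finset, Nat.card_Icc]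
  omega

lemma F_bijOn : Set.BijOn (F d y) (spider d y).edgeSet (Set.Icc 1 (M d y)) := by
  have hmaps : Set.MapsTo (F d y) (spider d y).edgeSet (Set.Icc 1 (M d y)) := by
    rintro e he
    rw [edgeSet_eq] at he
    obtain ⟨⟨i, j⟩, rfl⟩ := he
    rw [F_eIx]
    obtain ⟨h1, h2⟩ := posE_mem d y j.2
    exact Set.mem_Icc.2 ⟨(cc_mem d y h1 h2).1, (cc_mem d y h1 h2).2⟩
  have hinj : Set.InjOn (F d y) (spider d y).edgeSet := by
    rintro e1 h1 e2 h2 hF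
    rw [edgeSet_eq] at h1 h2
    obtain ⟨⟨i, j⟩, rfl⟩ := h1
    obtain ⟨⟨i', j'⟩, rfl⟩ := h2
    rw [F_eIx, F_eIx] at hF
    have hp := cc_injOn d y ⟨(posE_mem d y j.2).1, (posE_mem d y j.2).2⟩
      ⟨(posE_mem d y j'.2).1, (posE_mem d y j'.2).2⟩ hF
    obtain ⟨hi, hj⟩ := posE_inj d y j.2 j'.2 hp
    subst hi
    exact congrArg _ (Sigma.ext rfl (heq_of_eq (Fin.ext hj)))
  have himg : F d y '' (spider d y).edgeSet = Set.Icc 1 (M d y) := by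
    refine Set.eq_of_subset_of_ncard_le hmaps.image_subset ?_ (Set.finite_Icc _ _)
    rw [Set.ncard_image_of_injOn hinj, ncard_Icc_M, ncard_edgeSet]
    exact le_of_eq (by rw [M])
  exact ⟨hmaps, hinj, himg.symm.subset⟩

-- concrete vertex sums for F
lemma Fsum_pendant {i : Fin d} {j : Fin (y i)} (hj : (j : ℕ) + 1 = y i) :
    vertexSum (spider d y) (F d y) (some ⟨i, j⟩) = lab d y i (j : ℕ) := by
  rw [vsum_pendant d y _ hj, Sym2.eq_swap, F_edge]

lemma Fsum_internal {i : Fin d} {j : Fin (y i)} (hj : (j : ℕ) + 1 < y i) :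
    vertexSum (spider d y) (F d y) (some ⟨i, j⟩) =
      lab d y i (j : ℕ) + lab d y i ((j : ℕ) + 1) := by
  rw [vsum_internal d y (F d y) hj, Sym2.eq_swap, F_edge]
  congr 1
  exact F_cons_edge d y (by simp)

/-- the smaller of the two positions of the edges at internal vertex `(i,j)`. -/
def low (i : Fin d) (j : ℕ) : ℕ := if i.1 = 1 then posE d y i j else posE d y i (j + 1)

lemma internal_sum {i : Fin d} {j : Fin (y i)} (hj : (j : ℕ) + 1 < y i) :
    vertexSum (spider d y) (F d y) (some ⟨i, j⟩) =
      if (low d y i (j : ℕ)) % 2 = 0 then M d y else M d y + 1 := by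
  rw [Fsum_internal d y hj]
  unfold lab
  have h1 : B d y (i.1 + 1) = B d y i.1 + y i := by rw [B_succ, Y_eq d y i]
  have hb1 := posE_bounds d y (show (j : ℕ) < y i by omega)
  have hb2 := posE_bounds d y hj
  have hBM := B_le_M d y (i.1 + 1) i.2
  by_cases hi : i.1 = 1
  · have e1 : posE d y i ((j : ℕ) + 1) = posE d y i (j : ℕ) + 1 := by
      unfold posE; rw [if_pos hi, if_pos hi]; omega
    have e2 : low d y i (j : ℕ) = posE d y i (j : ℕ) := if_pos hi
    rw [e1, e2, cc_pair d y (by omega) (by omega)]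
  · have e1 : posE d y i (j : ℕ) = posE d y i ((j : ℕ) + 1) + 1 := by
      unfold posE; rw [if_neg hi, if_neg hi]; omega
    have e2 : low d y i (j : ℕ) = posE d y i ((j : ℕ) + 1) := if_neg hi
    rw [e1, e2, Nat.add_comm, cc_pair d y (by omega) (by omega)]

lemma low_succ {i : Fin d} {j : ℕ} (hj : j + 2 < y i) :
    low d y i (j + 1) = low d y i j + 1 ∨ low d y i j = low d y i (j + 1) + 1 := by
  have h1 : B d y (i.1 + 1) = B d y i.1 + y i := by rw [B_succ, Y_eq d y i]
  unfold low posE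
  split <;> omega

lemma internal_sum_bounds {i : Fin d} {j : Fin (y i)} (hj : (j : ℕ) + 1 < y i) :
    M d y ≤ vertexSum (spider d y) (F d y) (some ⟨i, j⟩) ∧
    vertexSum (spider d y) (F d y) (some ⟨i, j⟩) ≤ M d y + 1 := by
  rw [internal_sum d y hj]
  split <;> omega


lemma lab_mem {i : Fin d} {j : ℕ} (hj : j < y i) :
    1 ≤ lab d y i j ∧ lab d y i j ≤ M d y := by
  obtain ⟨h1, h2⟩ := posE_mem d y hj
  exact cc_mem d y h1 h2

lemma M_ge (hd : 3 ≤ d) (hy : ∀ i, 1 ≤ y i) : d ≤ M d y := by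
  calc d = ∑ _i : Fin d, 1 := by simp
  _ ≤ ∑ i, y i := Finset.sum_le_sum fun i _ => hy i

lemma Fsum_core_eq (hy : ∀ i, 1 ≤ y i) :
    vertexSum (spider d y) (F d y) none = ∑ i : Fin d, lab d y i 0 := by
  rw [vsum_core d y hy (F d y)]
  exact Finset.sum_congr rfl fun i _ => F_core_edge d y rfl

lemma Fsum_core_ge (hd : 3 ≤ d) (hy : ∀ i, 1 ≤ y i) :
    M d y + 2 ≤ vertexSum (spider d y) (F d y) none := by
  rw [Fsum_core_eq d y hy]
  have h0d : 0 < d := by omega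
  have h1d : 1 < d := by omega
  have hLd : d - 1 < d := by omega
  set i0 : Fin d := ⟨0, h0d⟩
  set i1 : Fin d := ⟨1, h1d⟩
  set iL : Fin d := ⟨d - 1, hLd⟩
  have hsub : ({i0, i1, iL} : Finset (Fin d)) ⊆ Finset.univ := Finset.subset_univ _
  have hge : lab d y i0 0 + (lab d y i1 0 + lab d y iL 0) ≤ ∑ i, lab d y i 0 := by
    refine le_trans (le_of_eq ?_) (Finset.sum_le_sum_of_subset hsub)
    rw [Finset.sum_insert (by simp [i0, i1, iL, Fin.ext_iff]; omega),
      Finset.sum_insert (by simp [i1, iL, Fin.ext_iff]; omega),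
      Finset.sum_singleton]
  have e0 : lab d y i0 0 = cc d y (B d y 1) := by
    unfold lab posE
    rw [if_neg (by simp [i0] : ¬ (i0 : Fin d).1 = 1)]
    norm_num
  have e1 : lab d y i1 0 = cc d y (B d y 1 + 1) := by
    unfold lab posE
    rw [if_pos (by simp [i1] : (i1 : Fin d).1 = 1)]
  have eL : lab d y iL 0 = cc d y (M d y) := by
    unfold lab posE
    rw [if_neg (by simp only [iL]; omega : ¬ (iL : Fin d).1 = 1)]
    rw [Nat.sub_zero, show (iL : Fin d).1 + 1 = d by simp only [iL]; omega, B_d]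
  have hB2 : B d y 1 + 1 ≤ M d y := by
    have h12 : B d y 2 = B d y 1 + y i1 := by rw [B_succ, Y_eq d y i1]
    have := B_le_M d y 2 (by omega)
    have := hy i1
    omega
  have hpair := cc_pair' d y hB2
  have hlast := cc_last d y (le_trans hd (M_ge d y hd hy))
  omega

lemma pend_label_i0 (hd : 3 ≤ d) (hy : ∀ i, 1 ≤ y i) :
    lab d y ⟨0, by omega⟩ (y ⟨0, by omega⟩ - 1) = M d y := by
  set i0 : Fin d := ⟨0, by omega⟩
  have hB1 : B d y 1 = y i0 := by
    have := B_succ d y 0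
    have := Y_eq d y i0
    simp only [B] at *
    simp_all [i0]
  have : posE d y i0 (y i0 - 1) = 1 := by
    unfold posE
    rw [if_neg (by simp [i0] : ¬ (i0 : Fin d).1 = 1)]
    rw [show (i0 : Fin d).1 + 1 = 1 by simp [i0], hB1]
    have := hy i0
    omega
  unfold lab
  rw [this, cc_one]


lemma Fsum_some_le {i : Fin d} (j : Fin (y i)) :
    vertexSum (spider d y) (F d y) (some ⟨i, j⟩) ≤ M d y + 1 := by
  rcases Nat.lt_or_ge ((j : ℕ) + 1) (y i) with h | h
  · exact (internal_sum_bounds d y h).2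
  · have hj : (j : ℕ) + 1 = y i := by have := j.2; omega
    rw [Fsum_pendant d y hj]
    have := lab_mem d y (show (j : ℕ) < y i from j.2)
    omega

lemma Fsum_consec {i : Fin d} {j k : Fin (y i)} (hjk : (j : ℕ) + 1 = (k : ℕ)) :
    vertexSum (spider d y) (F d y) (some ⟨i, j⟩) ≠
      vertexSum (spider d y) (F d y) (some ⟨i, k⟩) := by
  have hj : (j : ℕ) + 1 < y i := by have := k.2; omega
  rcases Nat.lt_or_ge ((k : ℕ) + 1) (y i) with h | h
  · -- both internal
    rw [internal_sum d y hj, internal_sum d y h]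
    have hls : low d y i ((j : ℕ) + 1) = low d y i (j : ℕ) + 1 ∨
        low d y i (j : ℕ) = low d y i ((j : ℕ) + 1) + 1 := low_succ d y (by omega)
    rw [hjk] at *
    split_ifs <;> omega
  · -- k pendant
    have hk : (k : ℕ) + 1 = y i := by have := k.2; omega
    rw [Fsum_internal d y hj, Fsum_pendant d y hk, hjk]
    have := (lab_mem d y (show (j : ℕ) < y i by omega)).1
    omega

lemma F_antimagic (hd : 3 ≤ d) (hy : ∀ i, 1 ≤ y i) :
    ∀ ⦃u v : V d y⦄, (spider d y).Adj u v →
      vertexSum (spider d y) (F d y) u ≠ vertexSum (spider d y) (F d y) v := by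
  have hcore : ∀ (i : Fin d) (j : Fin (y i)),
      vertexSum (spider d y) (F d y) none ≠ vertexSum (spider d y) (F d y) (some ⟨i, j⟩) := by
    intro i j
    have := Fsum_core_ge d y hd hy
    have := Fsum_some_le d y j
    omega
  intro u v huv
  match u, v with
  | none, none => exact absurd huv (not_adj_none_none d y)
  | none, some ⟨i, j⟩ => exact hcore i j
  | some ⟨i, j⟩, none => exact (hcore i j).symm
  | some ⟨i, j⟩, some ⟨i', k⟩ =>
    obtain ⟨hi, hc | hc⟩ := (adj_some_some d y).1 huv
    · subst hi; exact Fsum_consec d y hc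
    · subst hi; exact (Fsum_consec d y hc).symm

lemma F_isLocalAntimagic (hd : 3 ≤ d) (hy : ∀ i, 1 ≤ y i) :
    IsLocalAntimagic (spider d y) (F d y) := by
  constructor
  · have h : (spider d y).edgeSet.ncard = M d y := by rw [ncard_edgeSet, M]
    rw [h]
    exact F_bijOn d y
  · exact F_antimagic d y hd hy

lemma colorCount_le (hd : 3 ≤ d) (hy : ∀ i, 1 ≤ y i) :
    colorCount (spider d y) (F d y) ≤ d + 2 := by
  classical
  set g : Fin d → ℕ := fun i => lab d y i (y i - 1) with hg
  set T : Set ℕ := Set.range g ∪ {M d y + 1, vertexSum (spider d y) (F d y) none} with hT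
  have hsub : Set.range (vertexSum (spider d y) (F d y)) ⊆ T := by
    rintro v ⟨x, rfl⟩
    match x with
    | none => exact Or.inr (Or.inr rfl)
    | some ⟨i, j⟩ =>
      rcases Nat.lt_or_ge ((j : ℕ) + 1) (y i) with h | h
      · rw [internal_sum d y h]
        split
        · left
          refine ⟨⟨0, by omega⟩, ?_⟩
          rw [hg]
          exact pend_label_i0 d y hd hy
        · exact Or.inr (Or.inl rfl)
      · have hj : (j : ℕ) + 1 = y i := by have := j.2; omega
        rw [Fsum_pendant d y hj]
        refine Or.inl ⟨i, ?_⟩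
        show lab d y i (y i - 1) = lab d y i (j : ℕ)
        congr 1
        omega
  have hTfin : T.Finite := by
    apply Set.Finite.union (Set.finite_range g)
    exact (Set.finite_singleton _).insert _
  have hT2 : T.ncard ≤ d + 2 := by
    refine le_trans (Set.ncard_union_le _ _) ?_
    have h1 : (Set.range g).ncard ≤ d := by
      rw [← Set.image_univ]
      refine le_trans (Set.ncard_image_le Set.finite_univ) ?_
      rw [Set.ncard_univ, Nat.card_eq_fintype_card, Fintype.card_fin]
    have h2 : ({M d y + 1, vertexSum (spider d y) (F d y) none} : Set ℕ).ncard ≤ 2 := by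
      refine le_trans (Set.ncard_insert_le _ _) ?_
      rw [Set.ncard_singleton]
    omega
  exact le_trans (Set.ncard_le_ncard hsub hTfin) hT2


/-- the pendant vertex of leg `i`. -/
def pendV (hy : ∀ i, 1 ≤ y i) (i : Fin d) : V d y :=
  some ⟨i, ⟨y i - 1, by have := hy i; omega⟩⟩

/-- the pendant edge of leg `i`. -/
def pendE (hy : ∀ i, 1 ≤ y i) (i : Fin d) : Sym2 (V d y) :=
  s(some ⟨i, ⟨y i - 1, by have := hy i; omega⟩⟩, pred d y i ⟨y i - 1, by have := hy i; omega⟩)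

lemma pendE_mem (hy : ∀ i, 1 ≤ y i) (i : Fin d) : pendE d y hy i ∈ (spider d y).edgeSet := by
  rw [pendE, Sym2.eq_swap]
  exact (spider d y).mem_edgeSet.2 (adj_pred d y i _)

lemma pendE_inj (hy : ∀ i, 1 ≤ y i) : Function.Injective (pendE d y hy) := by
  intro i i' h
  unfold pendE at h
  rw [Sym2.eq_iff] at h
  rcases h with ⟨h1, -⟩ | ⟨h1, h2⟩
  · exact ((some_eq_some d y).1 h1).1
  · -- pendant of i equals pred of i' : impossible
    exfalso
    unfold pred at h1 h2
    split_ifs at h1 h2 with c1 c2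
    obtain ⟨hi, hv⟩ := (some_eq_some d y).1 h1
    subst hi
    simp at hv c1
    omega

lemma pend_vsum (hy : ∀ i, 1 ≤ y i) (f : Sym2 (V d y) → ℕ) (i : Fin d) :
    vertexSum (spider d y) f (pendV d y hy i) = f (pendE d y hy i) := by
  unfold pendV pendE
  exact vsum_pendant d y f (by show y i - 1 + 1 = y i; have := hy i; omega)

lemma lower_bound (hd : 3 ≤ d) (hy : ∀ i, 1 ≤ y i) (f : Sym2 (V d y) → ℕ)
    (hf : IsLocalAntimagic (spider d y) f) : d + 1 ≤ colorCount (spider d y) f := by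
  classical
  obtain ⟨hbij, -⟩ := hf
  rw [ncard_edgeSet d y, show (∑ i, y i) = M d y from rfl] at hbij
  -- pendant sums
  have hpend_le : ∀ i, vertexSum (spider d y) f (pendV d y hy i) ≤ M d y := by
    intro i
    rw [pend_vsum d y hy f i]
    exact (Set.mem_Icc.1 (hbij.mapsTo (pendE_mem d y hy i))).2
  have hpend_inj : Function.Injective (fun i => vertexSum (spider d y) f (pendV d y hy i)) := by
    intro i i' h
    simp only [pend_vsum d y hy f] at h
    exact pendE_inj d y hy (hbij.injOn (pendE_mem d y hy i) (pendE_mem d y hy i') h)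
  -- a vertex with big sum
  have hM1 : 1 ≤ M d y := le_trans (by omega) (M_ge d y hd hy)
  obtain ⟨e, he, hfe⟩ := hbij.surjOn (Set.mem_Icc.2 ⟨hM1, le_refl _⟩)
  rw [edgeSet_eq d y] at he
  obtain ⟨⟨i, j⟩, rfl⟩ := he
  have hbig : ∃ w : V d y, M d y + 1 ≤ vertexSum (spider d y) f w := by
    by_cases h0 : (j : ℕ) = 0
    · -- the core has big sum
      refine ⟨none, ?_⟩
      rw [vsum_core d y hy f]
      obtain ⟨t, ht⟩ : ∃ t : Fin d, t ≠ i := by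
        rcases Nat.lt_or_ge 0 i.1 with h | h
        · exact ⟨⟨0, by omega⟩, by rw [Fin.ne_iff_vne]; simp; omega⟩
        · exact ⟨⟨1, by omega⟩, by rw [Fin.ne_iff_vne]; simp; omega⟩
      have hsum : f s(none, some ⟨i, ⟨0, hy i⟩⟩) + f s(none, some ⟨t, ⟨0, hy t⟩⟩) ≤
          ∑ i' : Fin d, f s(none, some ⟨i', ⟨0, hy i'⟩⟩) := by
        have hpair : ∑ x ∈ ({i, t} : Finset (Fin d)), f s(none, some ⟨x, ⟨0, hy x⟩⟩)
            = f s(none, some ⟨i, ⟨0, hy i⟩⟩) + f s(none, some ⟨t, ⟨0, hy t⟩⟩) :=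
          Finset.sum_pair (Ne.symm ht)
        rw [← hpair]
        exact Finset.sum_le_sum_of_subset (Finset.subset_univ _)
      have hee : eIx d y ⟨i, j⟩ = s((none : V d y), some ⟨i, ⟨0, hy i⟩⟩) := by
        unfold eIx pred
        rw [dif_pos h0, Sym2.eq_iff]
        exact Or.inl ⟨rfl, (some_eq_some d y).2 ⟨rfl, by simp [h0]⟩⟩
      have h1 : f s((none : V d y), some ⟨i, ⟨0, hy i⟩⟩) = M d y := by rw [← hee]; exact hfe
      have h2 : 1 ≤ f s(none, some ⟨t, ⟨0, hy t⟩⟩) := by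
        have hmem : s((none : V d y), some ⟨t, ⟨0, hy t⟩⟩) ∈ (spider d y).edgeSet :=
          (spider d y).mem_edgeSet.2 ((adj_none_some d y).2 rfl)
        exact (Set.mem_Icc.1 (hbij.mapsTo hmem)).1
      omega
    · -- the previous vertex has big sum
      have hjlt : (j : ℕ) - 1 < y i := by have := j.2; omega
      set jm : Fin (y i) := ⟨(j : ℕ) - 1, hjlt⟩ with hjmdef
      have hjmv : (jm : ℕ) = (j : ℕ) - 1 := rfl
      have hjy : (jm : ℕ) + 1 < y i := by have := j.2; omega
      refine ⟨some ⟨i, jm⟩, ?_⟩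
      rw [vsum_internal d y f hjy]
      have hee : eIx d y ⟨i, j⟩ = s(some ⟨i, jm⟩, succV d y i (jm : ℕ) hjy) := by
        unfold eIx pred succV
        rw [dif_neg h0, Sym2.eq_iff]
        refine Or.inl ⟨?_, ?_⟩
        · exact (some_eq_some d y).2 ⟨rfl, rfl⟩
        · exact (some_eq_some d y).2 ⟨rfl, by simp only; omega⟩
      have hmem : s(some ⟨i, jm⟩, pred d y i jm) ∈ (spider d y).edgeSet := by
        rw [Sym2.eq_swap]
        exact (spider d y).mem_edgeSet.2 (adj_pred d y i _)
      have h2 := (Set.mem_Icc.1 (hbij.mapsTo hmem)).1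
      rw [← hee, hfe]
      omega
  obtain ⟨w, hw⟩ := hbig
  -- assemble
  set S : Set ℕ := insert (vertexSum (spider d y) f w)
      (Set.range fun i => vertexSum (spider d y) f (pendV d y hy i)) with hS
  have hSsub : S ⊆ Set.range (vertexSum (spider d y) f) := by
    rintro v (rfl | ⟨i, rfl⟩)
    · exact ⟨w, rfl⟩
    · exact ⟨pendV d y hy i, rfl⟩
  have hnm : vertexSum (spider d y) f w ∉
      Set.range fun i => vertexSum (spider d y) f (pendV d y hy i) := by
    rintro ⟨i, hi⟩
    simp only at hi
    have := hpend_le i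
    omega
  have hScard : S.ncard = d + 1 := by
    rw [hS, Set.ncard_insert_of_notMem hnm (Set.finite_range _), ← Set.image_univ,
      Set.ncard_image_of_injective _ hpend_inj, Set.ncard_univ,
      Nat.card_eq_fintype_card, Fintype.card_fin]
  rw [colorCount, ← hScard]
  exact Set.ncard_le_ncard hSsub (Set.finite_range _)

end
end SpiderAux

theorem stmt4 (d : ℕ) (hd : 3 ≤ d) (y : Fin d → ℕ) (hy : ∀ i, 1 ≤ y i) :
    d + 1 ≤ chiLA (spider d y) ∧ chiLA (spider d y) ≤ d + 2 := by
  have hmem : colorCount (spider d y) (SpiderAux.F d y) ∈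
      {n | ∃ f, IsLocalAntimagic (spider d y) f ∧ colorCount (spider d y) f = n} :=
    ⟨SpiderAux.F d y, SpiderAux.F_isLocalAntimagic d y hd hy, rfl⟩
  constructor
  · rw [chiLA]
    obtain ⟨f, hf, hc⟩ := Nat.sInf_mem (Set.nonempty_of_mem hmem)
    rw [← hc]
    exact SpiderAux.lower_bound d y hd hy f hf
  · exact le_trans (Nat.sInf_le hmem) (SpiderAux.colorCount_le d y hd hy)
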